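/- Let R be a finite index set and let (L_r)_{r∈R} be mutually independent nonnegative real-valued random variables on a common probability space with 0 ≤ L_r ≤ M_r almost surely for constants M_r ≥ 0. Let d > 0 and let m_r be constants with 0 < m_r ≤ d for every r ∈ R, and suppose E[∑_{r∈R} L_r] ≤ d. Set Δ := ∑_{r∈R} (M_r / m_r)². Then for every real N ≥ 1, P( ∑_{r∈R} L_r ≥ (1 + √(2·(log N)·Δ))·d ) ≤ N^{−4}. -/

import Mathlib

open MeasureTheory ProbabilityTheory

section HoeffdingAuxOuter
open Real
section HoeffdingAux



variable {p : ℝ}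

lemma den_pos (hp0 : 0 ≤ p) (hp1 : p ≤ 1) (s : ℝ) : 0 < 1 - p + p * Real.exp s := by
  rcases eq_or_lt_of_le hp0 with h | h
  · simp [← h]
  · have := Real.exp_pos s
    nlinarith

lemma hasDerivAt_den (s : ℝ) :
    HasDerivAt (fun s => 1 - p + p * Real.exp s) (p * Real.exp s) s := by
  simpa using ((Real.hasDerivAt_exp s).const_mul p).const_add (1 - p)

lemma hasDerivAt_g1 (hp0 : 0 ≤ p) (hp1 : p ≤ 1) (s : ℝ) :
    HasDerivAt (fun s => p + s / 4 - p * Real.exp s / (1 - p + p * Real.exp s))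
      (1 / 4 - (p * Real.exp s * (1 - p + p * Real.exp s) -
        p * Real.exp s * (p * Real.exp s)) / (1 - p + p * Real.exp s) ^ 2) s := by
  have h1 : HasDerivAt (fun s : ℝ => p + s / 4) (1 / 4) s := by
    simpa using ((hasDerivAt_id s).div_const 4).const_add p
  have h2 : HasDerivAt (fun s => p * Real.exp s / (1 - p + p * Real.exp s))
      ((p * Real.exp s * (1 - p + p * Real.exp s) -
        p * Real.exp s * (p * Real.exp s)) / (1 - p + p * Real.exp s) ^ 2) s :=
    ((Real.hasDerivAt_exp s).const_mul p).div (hasDerivAt_den s) (den_pos hp0 hp1 s).ne'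
  exact h1.sub h2

lemma g1_nonneg (hp0 : 0 ≤ p) (hp1 : p ≤ 1) {s : ℝ} (hs : 0 ≤ s) :
    0 ≤ p + s / 4 - p * Real.exp s / (1 - p + p * Real.exp s) := by
  have hmono : Monotone (fun s => p + s / 4 - p * Real.exp s / (1 - p + p * Real.exp s)) := by
    refine monotone_of_deriv_nonneg (fun x => (hasDerivAt_g1 hp0 hp1 x).differentiableAt) ?_
    intro x
    rw [(hasDerivAt_g1 hp0 hp1 x).deriv]
    have hd := den_pos hp0 hp1 x
    have he := Real.exp_pos x
    rw [sub_nonneg, div_le_iff₀ (by positivity)]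
    nlinarith [sq_nonneg (1 - p - p * Real.exp x)]
  have h0 : (fun s => p + s / 4 - p * Real.exp s / (1 - p + p * Real.exp s)) 0 = 0 := by
    simp
  calc (0:ℝ) = _ := h0.symm
    _ ≤ _ := hmono hs

lemma hoeff_log (hp0 : 0 ≤ p) (hp1 : p ≤ 1) {s : ℝ} (hs : 0 ≤ s) :
    Real.log (1 - p + p * Real.exp s) ≤ p * s + s ^ 2 / 8 := by
  set g : ℝ → ℝ := fun s => p * s + s ^ 2 / 8 - Real.log (1 - p + p * Real.exp s) with hg
  have hder : ∀ x, HasDerivAt g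
      (p + x / 4 - p * Real.exp x / (1 - p + p * Real.exp x)) x := by
    intro x
    have ha : HasDerivAt (fun x : ℝ => p * x) p x := by
      simpa using (hasDerivAt_id x).const_mul p
    have hb : HasDerivAt (fun x : ℝ => x ^ 2 / 8) (x / 4) x := by
      exact ((hasDerivAt_pow 2 x).div_const 8).congr_deriv (by push_cast; ring)
    have h2 : HasDerivAt (fun x => Real.log (1 - p + p * Real.exp x))
        (p * Real.exp x / (1 - p + p * Real.exp x)) x :=
      (hasDerivAt_den x).log (den_pos hp0 hp1 x).ne'
    exact (ha.add hb).sub h2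
  have hdiff : Differentiable ℝ g := fun x => (hder x).differentiableAt
  have hmono : MonotoneOn g (Set.Ici 0) := by
    refine monotoneOn_of_deriv_nonneg (convex_Ici 0) hdiff.continuous.continuousOn
      hdiff.differentiableOn ?_
    intro x hx
    rw [interior_Ici] at hx
    rw [(hder x).deriv]
    exact g1_nonneg hp0 hp1 hx.le
  have h0 : g 0 = 0 := by simp [hg]
  have := hmono (Set.self_mem_Ici) hs hs
  rw [h0] at this
  simpa [hg, sub_nonneg] using this

end HoeffdingAux
end HoeffdingAuxOuter

lemma mgf_le_of_mem_Icc {Ω : Type*} [MeasurableSpace Ω] (μ : Measure Ω) [IsProbabilityMeasure μ]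
    {X : Ω → ℝ} {M t : ℝ} (hX : Measurable X) (hM : 0 ≤ M)
    (hb : ∀ᵐ ω ∂μ, 0 ≤ X ω ∧ X ω ≤ M) (ht : 0 ≤ t) :
    mgf X μ t ≤ Real.exp (t * ∫ ω, X ω ∂μ + t ^ 2 * M ^ 2 / 8) := by
  have hXint : Integrable X μ :=
    (integrable_const M).mono' hX.aestronglyMeasurable
      (hb.mono fun ω h => by rw [Real.norm_eq_abs, abs_of_nonneg h.1]; exact h.2)
  set ν := ∫ ω, X ω ∂μ with hν
  have hν0 : 0 ≤ ν := integral_nonneg_of_ae (hb.mono fun ω h => h.1)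
  have hνM : ν ≤ M := by
    calc ν ≤ ∫ _, M ∂μ := integral_mono_ae hXint (integrable_const M) (hb.mono fun ω h => h.2)
    _ = M := by simp
  rcases eq_or_lt_of_le hM with hM0 | hM0
  · have hX0 : ∀ᵐ ω ∂μ, X ω = 0 := hb.mono fun ω h => le_antisymm (by rw [hM0]; exact h.2) h.1
    have h1 : mgf X μ t = 1 := by
      rw [mgf, integral_congr_ae
        ((hX0.mono fun ω h => by simp [h]) : (fun ω => Real.exp (t * X ω)) =ᵐ[μ] fun _ => 1)]
      simp
    have h2 : ν = 0 := by
      rw [hν, integral_congr_ae (hX0 : X =ᵐ[μ] fun _ => 0)]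
      simp
    rw [h1, h2, ← hM0]
    simp
  · set p := ν / M with hp
    have hp0 : 0 ≤ p := div_nonneg hν0 hM
    have hp1 : p ≤ 1 := (div_le_one hM0).mpr hνM
    have hint : Integrable (fun ω => Real.exp (t * X ω)) μ := by
      refine (integrable_const (Real.exp (t * M))).mono'
        ((hX.const_mul t).exp).aestronglyMeasurable (hb.mono fun ω h => ?_)
      rw [Real.norm_eq_abs, abs_of_pos (Real.exp_pos _)]
      exact Real.exp_le_exp.mpr (mul_le_mul_of_nonneg_left h.2 ht)
    set c := (Real.exp (t * M) - 1) / M with hc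
    have hpt : ∀ᵐ ω ∂μ, Real.exp (t * X ω) ≤ 1 + X ω * c := by
      refine hb.mono fun ω h => ?_
      have ha : (0:ℝ) ≤ 1 - X ω / M := by
        rw [sub_nonneg]; exact (div_le_one hM0).mpr h.2
      have hb' : (0:ℝ) ≤ X ω / M := div_nonneg h.1 hM0.le
      have hab : (1 - X ω / M) + X ω / M = 1 := by ring
      have h2 := convexOn_exp.2 (Set.mem_univ (0:ℝ)) (Set.mem_univ (t * M)) ha hb' hab
      simp only [smul_eq_mul, mul_zero, zero_add] at h2
      have h1 : X ω / M * (t * M) = t * X ω := by field_simp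
      rw [h1, Real.exp_zero] at h2
      calc Real.exp (t * X ω) ≤ (1 - X ω / M) * 1 + X ω / M * Real.exp (t * M) := h2
        _ = 1 + X ω * c := by rw [hc]; field_simp; ring
    have hineq : mgf X μ t ≤ 1 - p + p * Real.exp (t * M) := by
      calc mgf X μ t ≤ ∫ ω, (1 + X ω * c) ∂μ :=
            integral_mono_ae hint ((integrable_const 1).add (hXint.mul_const c)) hpt
        _ = 1 + ν * c := by
            rw [integral_add (integrable_const 1) (hXint.mul_const c), integral_const,
              integral_mul_const]
            simp [hν]
        _ = 1 - p + p * Real.exp (t * M) := by rw [hp, hc]; field_simp; ring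
    have hfin := (Real.log_le_iff_le_exp (den_pos hp0 hp1 (t * M))).mp
      (hoeff_log hp0 hp1 (mul_nonneg ht hM))
    refine hineq.trans (hfin.trans (le_of_eq ?_))
    congr 1
    rw [hp]
    field_simp

/-- Node capacity violation bound: independent loads `L r ∈ [0, M r]`, single-demand
bounds `m r ≤ d`, expected total load at most the capacity `d`.  With
`Δ = ∑ (M r / m r)²`, the probability that the total load exceeds
`(1 + √(2 (log N) Δ)) d` is at most `N⁻⁴`. -/
theorem node_capacity_violation {Ω : Type*} [MeasurableSpace Ω] (μ : Measure Ω)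
    [IsProbabilityMeasure μ]
    {R : Type*} [Fintype R] (L : R → Ω → ℝ) (M m : R → ℝ) (d : ℝ)
    (hmeas : ∀ r, Measurable (L r))
    (hindep : iIndepFun L μ)
    (hM : ∀ r, 0 ≤ M r)
    (hbdd : ∀ r, ∀ᵐ ω ∂μ, 0 ≤ L r ω ∧ L r ω ≤ M r)
    (hd : 0 < d)
    (hm : ∀ r, 0 < m r ∧ m r ≤ d)
    (hE : ∫ ω, ∑ r, L r ω ∂μ ≤ d) :
    ∀ N : ℝ, 1 ≤ N →
      μ {ω | (1 + Real.sqrt (2 * Real.log N * ∑ r, (M r / m r) ^ 2)) * d ≤ ∑ r, L r ω}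
        ≤ ENNReal.ofReal (N ^ (-4 : ℝ)) := by
  intro N hN
  have hN0 : (0:ℝ) < N := lt_of_lt_of_le one_pos hN
  have hl : 0 ≤ Real.log N := Real.log_nonneg hN
  set Δ : ℝ := ∑ r, (M r / m r) ^ 2 with hΔ
  have hΔ0 : 0 ≤ Δ := Finset.sum_nonneg fun r _ => sq_nonneg _
  set ε : ℝ := Real.sqrt (2 * Real.log N * Δ) with hε
  have hε0 : 0 ≤ ε := Real.sqrt_nonneg _
  have hε2 : ε ^ 2 = 2 * Real.log N * Δ := Real.sq_sqrt (by positivity)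
  have hNpow : (0:ℝ) ≤ N ^ (-4 : ℝ) := Real.rpow_nonneg hN0.le _
  rw [ENNReal.le_ofReal_iff_toReal_le (measure_ne_top μ _) hNpow]
  rcases eq_or_lt_of_le hΔ0 with hΔz | hΔpos
  · -- degenerate case : all M r = 0
    have hM0 : ∀ r, M r = 0 := by
      intro r
      have h0 : (M r / m r) ^ 2 = 0 :=
        (Finset.sum_eq_zero_iff_of_nonneg fun r _ => sq_nonneg _).mp hΔz.symm r (Finset.mem_univ r)
      have h1 : M r / m r = 0 := by
        have := sq_eq_zero_iff.mp h0
        exact this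
      rcases div_eq_zero_iff.mp h1 with h | h
      · exact h
      · exact absurd h (hm r).1.ne'
    have hS0 : ∀ᵐ ω ∂μ, ∀ r, L r ω = 0 :=
      ae_all_iff.mpr fun r => (hbdd r).mono fun ω h =>
        le_antisymm (by rw [← hM0 r]; exact h.2) h.1
    have hzero : μ {ω | (1 + ε) * d ≤ ∑ r, L r ω} = 0 := by
      refine measure_eq_zero_iff_ae_notMem.mpr (hS0.mono fun ω h => ?_)
      simp only [Set.mem_setOf_eq, not_le]
      rw [Finset.sum_eq_zero fun r _ => h r]
      exact mul_pos (by linarith) hd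
    rw [hzero]
    simpa using hNpow
  · -- main case
    set t : ℝ := 4 * ε / (Δ * d) with htdef
    have ht : 0 ≤ t := by positivity
    have hint_r : ∀ r, Integrable (L r) μ := fun r =>
      (integrable_const (M r)).mono' (hmeas r).aestronglyMeasurable
        ((hbdd r).mono fun ω h => by rw [Real.norm_eq_abs, abs_of_nonneg h.1]; exact h.2)
    have hmeasS : Measurable fun ω => ∑ r, L r ω :=
      Finset.measurable_sum Finset.univ fun r _ => hmeas r
    have hbddS : ∀ᵐ ω ∂μ, ∑ r, L r ω ≤ ∑ r, M r :=
      (ae_all_iff.mpr hbdd).mono fun ω h =>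
        Finset.sum_le_sum fun r _ => (h r).2
    have hint : Integrable (fun ω => Real.exp (t * ∑ r, L r ω)) μ := by
      refine (integrable_const (Real.exp (t * ∑ r, M r))).mono'
        ((hmeasS.const_mul t).exp).aestronglyMeasurable (hbddS.mono fun ω h => ?_)
      rw [Real.norm_eq_abs, abs_of_pos (Real.exp_pos _)]
      exact Real.exp_le_exp.mpr (mul_le_mul_of_nonneg_left h ht)
    have key := measure_ge_le_exp_mul_mgf (μ := μ) (X := fun ω => ∑ r, L r ω)
      ((1 + ε) * d) ht hint
    have hsum_eq : mgf (fun ω => ∑ r, L r ω) μ t = ∏ r, mgf (L r) μ t := by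
      rw [show (fun ω => ∑ r, L r ω) = ∑ r, L r by ext ω; simp]
      exact hindep.mgf_sum hmeas Finset.univ
    have hmgf_r : ∀ r, mgf (L r) μ t ≤
        Real.exp (t * ∫ ω, L r ω ∂μ + t ^ 2 * (M r) ^ 2 / 8) := fun r =>
      mgf_le_of_mem_Icc μ (hmeas r) (hM r) (hbdd r) ht
    have hprod : ∏ r, mgf (L r) μ t ≤
        Real.exp (∑ r, (t * ∫ ω, L r ω ∂μ + t ^ 2 * (M r) ^ 2 / 8)) := by
      rw [Real.exp_sum]
      exact Finset.prod_le_prod (fun r _ => mgf_nonneg) fun r _ => hmgf_r r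
    have hM2 : ∑ r, (M r) ^ 2 ≤ Δ * d ^ 2 := by
      rw [hΔ, Finset.sum_mul]
      refine Finset.sum_le_sum fun r _ => ?_
      have hmr := hm r
      have h1 : (M r) ^ 2 = (M r / m r) ^ 2 * (m r) ^ 2 := by
        rw [div_pow, div_mul_cancel₀ _ (pow_ne_zero 2 hmr.1.ne')]
      rw [h1]
      exact mul_le_mul_of_nonneg_left (by nlinarith [hmr.1, hmr.2]) (sq_nonneg _)
    have hEs : ∑ r, ∫ ω, L r ω ∂μ ≤ d := by
      rw [← integral_finset_sum Finset.univ fun r _ => hint_r r]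
      exact hE
    have hexpo : ∑ r, (t * ∫ ω, L r ω ∂μ + t ^ 2 * (M r) ^ 2 / 8) ≤
        t * d + t ^ 2 * (Δ * d ^ 2) / 8 := by
      rw [Finset.sum_add_distrib, ← Finset.mul_sum, ← Finset.sum_div, ← Finset.mul_sum]
      have h1 : t * ∑ r, ∫ ω, L r ω ∂μ ≤ t * d := mul_le_mul_of_nonneg_left hEs ht
      have h2 : t ^ 2 * ∑ r, (M r) ^ 2 ≤ t ^ 2 * (Δ * d ^ 2) :=
        mul_le_mul_of_nonneg_left hM2 (sq_nonneg t)
      linarith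
    have hfinal : Real.exp (-t * ((1 + ε) * d)) *
        Real.exp (t * d + t ^ 2 * (Δ * d ^ 2) / 8) = N ^ (-4 : ℝ) := by
      rw [← Real.exp_add, Real.rpow_def_of_pos hN0]
      congr 1
      rw [htdef]
      have h1 : -(4 * ε / (Δ * d)) * ((1 + ε) * d) +
          ((4 * ε / (Δ * d)) * d + (4 * ε / (Δ * d)) ^ 2 * (Δ * d ^ 2) / 8) =
          -(2 * ε ^ 2 / Δ) := by
        field_simp
        ring
      rw [h1, hε2]
      field_simp
      ring
    calc (μ {ω | (1 + ε) * d ≤ ∑ r, L r ω}).toReal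
        ≤ Real.exp (-t * ((1 + ε) * d)) * mgf (fun ω => ∑ r, L r ω) μ t := key
      _ ≤ Real.exp (-t * ((1 + ε) * d)) *
          Real.exp (t * d + t ^ 2 * (Δ * d ^ 2) / 8) := by
          refine mul_le_mul_of_nonneg_left ?_ (Real.exp_pos _).le
          rw [hsum_eq]
          exact hprod.trans (Real.exp_le_exp.mpr hexpo)
      _ = N ^ (-4 : ℝ) := hfinal
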